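/- Let E be a nonzero real Banach space and A ⊆ E × E* be quasidense. Then A is of type (NI): for all (y*,y**) ∈ E* × E**, inf_{(s,s*)∈A} ⟨s* − y*, ŝ − y**⟩ ≤ 0. -/

import Mathlib

theorem stmt7 {E : Type*} [NormedAddCommGroup E] [NormedSpace ℝ E] [CompleteSpace E]
    [Nontrivial E]
    (A : Set (E × StrongDual ℝ E))
    (hqd : ∀ c : E × StrongDual ℝ E,
      (⨅ p ∈ A, ((‖p.1 - c.1‖ ^ 2 / 2 + ‖p.2 - c.2‖ ^ 2 / 2
        + (p.2 - c.2) (p.1 - c.1) : ℝ) : EReal)) ≤ 0)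
    (y' : StrongDual ℝ E) (y'' : StrongDual ℝ (StrongDual ℝ E)) :
    (⨅ p ∈ A,
      (((NormedSpace.inclusionInDoubleDual ℝ E p.1 - y'') (p.2 - y') : ℝ) : EReal)) ≤ 0 := by
  have key : ∀ ε : ℝ, 0 < ε → ∃ p ∈ A,
      ((NormedSpace.inclusionInDoubleDual ℝ E p.1 - y'') (p.2 - y') : ℝ) < ε := by
    intro ε hε
    set m : ℝ := ‖y''‖ with hm
    have hm0 : 0 ≤ m := norm_nonneg y''
    -- choose z with ‖z‖ ≤ m and y'' z ≥ m^2 - ε/2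
    obtain ⟨z, hzn, hzv⟩ : ∃ z : StrongDual ℝ E, ‖z‖ ≤ m ∧ m ^ 2 - ε / 2 ≤ y'' z := by
      by_cases hcase : m ^ 2 ≤ ε / 2
      · exact ⟨0, by simp [hm0], by simp; linarith⟩
      · push_neg at hcase
        have hmpos : 0 < m := by
          rcases lt_or_ge 0 m with h | h
          · exact h
          · have : m = 0 := le_antisymm h hm0
            rw [this] at hcase; nlinarith
        have hδ : (0:ℝ) < ε / (2 * m) := by positivity
        have hr : m - ε / (2 * m) < ‖y''‖ := by rw [← hm]; linarith
        obtain ⟨x, hx1, hx2⟩ := y''.exists_lt_apply_of_lt_opNorm hr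
        -- adjust sign so that y'' applied is ≥ |y'' x|
        have : ∃ x' : StrongDual ℝ E, ‖x'‖ ≤ 1 ∧ m - ε / (2 * m) < y'' x' := by
          rcases le_or_gt 0 (y'' x) with h | h
          · exact ⟨x, hx1.le, by rwa [Real.norm_eq_abs, abs_of_nonneg h] at hx2⟩
          · refine ⟨-x, by simpa using hx1.le, ?_⟩
            rw [map_neg]
            rwa [Real.norm_eq_abs, abs_of_neg h] at hx2
        obtain ⟨x', hx'1, hx'2⟩ := this
        refine ⟨m • x', ?_, ?_⟩
        · rw [norm_smul, Real.norm_eq_abs, abs_of_nonneg hm0]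
          nlinarith
        · rw [map_smul, smul_eq_mul]
          have : m * (m - ε / (2 * m)) ≤ m * y'' x' :=
            mul_le_mul_of_nonneg_left hx'2.le hm0
          have hms : m * (m - ε / (2 * m)) = m ^ 2 - ε / 2 := by
            field_simp
          linarith [hms ▸ this]
    -- apply quasidensity at c = (0, y' + z)
    obtain ⟨p, hpA, hp⟩ : ∃ p ∈ A, (‖p.1 - (0:E)‖ ^ 2 / 2 + ‖p.2 - (y' + z)‖ ^ 2 / 2
        + (p.2 - (y' + z)) (p.1 - 0) : ℝ) < ε / 2 := by
      have h := hqd (0, y' + z)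
      have h2 : (⨅ p ∈ A, ((‖p.1 - (0:E)‖ ^ 2 / 2 + ‖p.2 - (y' + z)‖ ^ 2 / 2
          + (p.2 - (y' + z)) (p.1 - 0) : ℝ) : EReal)) < ((ε / 2 : ℝ) : EReal) :=
        lt_of_le_of_lt h (by exact_mod_cast (by linarith : (0:ℝ) < ε / 2))
      obtain ⟨p, hp⟩ := iInf_lt_iff.mp h2
      obtain ⟨hpA, hp⟩ := iInf_lt_iff.mp hp
      exact ⟨p, hpA, by exact_mod_cast hp⟩
    refine ⟨p, hpA, ?_⟩
    obtain ⟨s, t⟩ := p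
    simp only [sub_zero] at hp ⊢
    -- notation: v = t - (y' + z)
    set v : StrongDual ℝ E := t - (y' + z) with hv
    have hts : t - y' = v + z := by rw [hv]; abel
    have hG : (NormedSpace.inclusionInDoubleDual ℝ E s - y'') (t - y') =
        v s + z s - y'' v - y'' z := by
      rw [ContinuousLinearMap.sub_apply, NormedSpace.dual_def, hts]
      simp only [ContinuousLinearMap.add_apply, map_add]
      ring
    rw [hG]
    have hb1 : z s ≤ m * ‖s‖ := by
      have h1 : z s ≤ ‖z s‖ := le_abs_self _
      have h2 : ‖z s‖ ≤ ‖z‖ * ‖s‖ := z.le_opNorm s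
      have h3 : ‖z‖ * ‖s‖ ≤ m * ‖s‖ :=
        mul_le_mul_of_nonneg_right hzn (norm_nonneg s)
      linarith
    have hb2 : -(y'' v) ≤ m * ‖v‖ := by
      have h1 : -(y'' v) ≤ ‖y'' v‖ := neg_le_abs _
      have h2 : ‖y'' v‖ ≤ ‖y''‖ * ‖v‖ := y''.le_opNorm v
      linarith [mul_le_mul_of_nonneg_right (le_of_eq hm.symm) (norm_nonneg v)]
    have hpv : ‖s‖ ^ 2 / 2 + ‖v‖ ^ 2 / 2 + v s < ε / 2 := hp
    nlinarith [sq_nonneg (‖s‖ - m), sq_nonneg (‖v‖ - m)]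
  -- conclude the EReal infimum is ≤ 0
  by_contra hcon
  push_neg at hcon
  set a : EReal := ⨅ p ∈ A,
      (((NormedSpace.inclusionInDoubleDual ℝ E p.1 - y'') (p.2 - y') : ℝ) : EReal) with ha
  have hle : ∀ ε : ℝ, 0 < ε → a ≤ (ε : EReal) := by
    intro ε hε
    obtain ⟨p, hpA, hp⟩ := key ε hε
    calc a ≤ ((NormedSpace.inclusionInDoubleDual ℝ E p.1 - y'') (p.2 - y') : ℝ) := by
              refine iInf_le_of_le p ?_
              exact iInf_le_of_le hpA le_rfl
      _ ≤ (ε : EReal) := by exact_mod_cast hp.le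
  rcases eq_or_ne a ⊤ with h | h
  · have := hle 1 one_pos
    rw [h] at this
    exact absurd this (not_le.mpr (EReal.coe_lt_top 1))
  · have hbot : a ≠ ⊥ := ne_bot_of_gt hcon
    have hpos : 0 < a.toReal := by
      have := EReal.coe_toReal h hbot
      rw [← this] at hcon
      exact_mod_cast hcon
    have := hle (a.toReal / 2) (by linarith)
    have hlt : ((a.toReal / 2 : ℝ) : EReal) < a := by
      rw [← EReal.coe_toReal h hbot]
      exact_mod_cast (by linarith : a.toReal / 2 < a.toReal)
    exact absurd (lt_of_le_of_lt this hlt) (lt_irrefl a)
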